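/- Let A be a graded Artinian K-algebra and z ∈ A₁ a linear form with z^p = 0, z^{p−1} ≠ 0. Then the multiplication maps ×z ∈ End(A) and ×z* ∈ End(Gr_{(z)}(A)) have the same Jordan canonical form; equivalently rank((×z)^α) = rank((×z*)^α) for all α ≥ 1. -/
import Mathlib


open Module LinearMap

/-- The `i`-th graded piece `(z^i)/(z^{i+1})` of the form ring `Gr_{(z)}(A)`,
as a `K`-vector space. -/
abbrev grPiece (K : Type*) (A : Type*) [Field K] [CommRing A] [Algebra K A]
    (z : A) (i : ℕ) :=
  ((Ideal.span {z ^ i}).restrictScalars K) ⧸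
    Submodule.comap ((Ideal.span {z ^ i}).restrictScalars K).subtype
      ((Ideal.span {z ^ (i + 1)}).restrictScalars K)

section Aux

variable (K : Type*) [Field K] (M : ℕ → Type*) [∀ i, AddCommGroup (M i)]
  [∀ i, Module K (M i)]

/-- The range of `E^α` is the span of the components of index `≥ α`. -/
lemma aux_range_pow (g : ∀ i, M i →ₗ[K] M (i + 1)) (hg : ∀ i, Function.Surjective (g i))
    (E : Module.End K (DirectSum ℕ M))
    (hE : E = DirectSum.toModule K ℕ (DirectSum ℕ M)
      (fun i => (DirectSum.lof K ℕ M (i + 1)) ∘ₗ g i)) (α : ℕ) :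
    LinearMap.range (E ^ α) = ⨆ j : ℕ, LinearMap.range (DirectSum.lof K ℕ M (j + α)) := by
  classical
  induction α with
  | zero =>
    rw [pow_zero]
    have h1 : LinearMap.range (1 : Module.End K (DirectSum ℕ M)) = ⊤ :=
      LinearMap.range_eq_top.mpr fun x => ⟨x, rfl⟩
    rw [h1]
    symm
    rw [eq_top_iff]
    intro x _
    induction x using DirectSum.induction_on with
    | zero => exact Submodule.zero_mem _
    | of i y =>
      exact le_iSup (fun j => LinearMap.range (DirectSum.lof K ℕ M (j + 0))) i ⟨y, rfl⟩
    | add x y hx hy => exact Submodule.add_mem _ (hx Submodule.mem_top) (hy Submodule.mem_top)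
  | succ α ih =>
    have hcomp : ∀ i : ℕ, E ∘ₗ DirectSum.lof K ℕ M i
        = (DirectSum.lof K ℕ M (i + 1)) ∘ₗ g i := by
      intro i
      ext x
      simp [hE, DirectSum.toModule_lof]
    have : (E ^ (α + 1)) = E ∘ₗ (E ^ α) := by
      rw [pow_succ']; rfl
    rw [this, LinearMap.range_comp, ih, Submodule.map_iSup]
    congr 1
    funext j
    rw [← LinearMap.range_comp, hcomp (j + α), LinearMap.range_comp,
      LinearMap.range_eq_top.mpr (hg (j + α)), Submodule.map_top]
    rfl

/-- Dimension count for the span of the components of index `≥ α`. -/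
lemma aux_finrank_sup [∀ i, FiniteDimensional K (M i)]
    (p : ℕ) (hM : ∀ j, p ≤ j → Subsingleton (M j))
    (f : ℕ → ℕ) (hf0 : ∀ j, p ≤ j → f j = 0)
    (hfrec : ∀ j, f j = finrank K (M j) + f (j + 1)) :
    ∀ k α, p ≤ α + k →
      FiniteDimensional K (⨆ j : ℕ, LinearMap.range (DirectSum.lof K ℕ M (j + α)) :
        Submodule K (DirectSum ℕ M)) ∧
      finrank K (⨆ j : ℕ, LinearMap.range (DirectSum.lof K ℕ M (j + α)) :
        Submodule K (DirectSum ℕ M)) = f α := by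
  classical
  have hbot : ∀ m, p ≤ m → LinearMap.range (DirectSum.lof K ℕ M m) = ⊥ := by
    intro m hm
    have := hM m hm
    rw [LinearMap.range_eq_bot]
    ext x
    rw [Subsingleton.elim x 0, map_zero]; rfl
  intro k
  induction k with
  | zero =>
    intro α hα
    have hS : (⨆ j : ℕ, LinearMap.range (DirectSum.lof K ℕ M (j + α))) = ⊥ := by
      apply le_antisymm _ bot_le
      apply iSup_le
      intro j
      rw [hbot (j + α) (le_trans (by omega) (Nat.le_add_left α j))]
    rw [hS, hf0 α (by omega)]
    exact ⟨inferInstance, finrank_bot K _⟩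
  | succ k ih =>
    intro α hα
    have ih' := ih (α + 1) (by omega)
    have hsplit : (⨆ j : ℕ, LinearMap.range (DirectSum.lof K ℕ M (j + α)))
        = LinearMap.range (DirectSum.lof K ℕ M α)
          ⊔ ⨆ j : ℕ, LinearMap.range (DirectSum.lof K ℕ M (j + (α + 1))) := by
      apply le_antisymm
      · apply iSup_le
        intro j
        rcases j with _ | j
        · rw [Nat.zero_add]
          exact le_sup_left
        · refine le_trans ?_ le_sup_right
          rw [show j + 1 + α = j + (α + 1) by omega]
          exact le_iSup (fun j => LinearMap.range (DirectSum.lof K ℕ M (j + (α + 1)))) j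
      · apply sup_le
        · have h := le_iSup (fun j => LinearMap.range (DirectSum.lof K ℕ M (j + α))) 0
          rwa [Nat.zero_add] at h
        · apply iSup_le
          intro j
          rw [show j + (α + 1) = (j + 1) + α by omega]
          exact le_iSup (fun j => LinearMap.range (DirectSum.lof K ℕ M (j + α))) (j + 1)
    have hdisj : LinearMap.range (DirectSum.lof K ℕ M α)
        ⊓ (⨆ j : ℕ, LinearMap.range (DirectSum.lof K ℕ M (j + (α + 1)))) = ⊥ := by
      apply le_antisymm _ bot_le
      have hker : (⨆ j : ℕ, LinearMap.range (DirectSum.lof K ℕ M (j + (α + 1))))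
          ≤ LinearMap.ker (DirectSum.component K ℕ M α) := by
        apply iSup_le
        rintro j x ⟨y, rfl⟩
        rw [LinearMap.mem_ker, DirectSum.component.of]
        rw [dif_neg (by omega)]
      rintro x ⟨⟨y, rfl⟩, hx2⟩
      have h0 : y = 0 := by
        have h := hker hx2
        rw [LinearMap.mem_ker] at h
        rwa [DirectSum.component.lof_self] at h
      simp [h0]
    have hrangefin : FiniteDimensional K (LinearMap.range (DirectSum.lof K ℕ M α)) :=
      inferInstance
    have heq : finrank K (LinearMap.range (DirectSum.lof K ℕ M α)) = finrank K (M α) := by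
      have hinj : Function.Injective (DirectSum.lof K ℕ M α) := by
        intro a b hab
        have h := congrArg (DirectSum.component K ℕ M α) hab
        rwa [DirectSum.component.lof_self, DirectSum.component.lof_self] at h
      exact (LinearEquiv.finrank_eq (LinearEquiv.ofInjective _ hinj)).symm
    haveI := ih'.1
    constructor
    · rw [hsplit]
      exact Submodule.finiteDimensional_sup _ _
    · rw [hsplit]
      have := Submodule.finrank_sup_add_finrank_inf_eq
        (LinearMap.range (DirectSum.lof K ℕ M α))
        (⨆ j : ℕ, LinearMap.range (DirectSum.lof K ℕ M (j + (α + 1))))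
      rw [hdisj, finrank_bot, add_zero] at this
      rw [this, heq, ih'.2, hfrec α]

end Aux

/-- `A` a graded Artinian `K`-algebra, `z ∈ A₁` a linear form with
`z^p = 0`, `z^{p-1} ≠ 0`.  Let `z*` be the degree-one endomorphism of
`Gr_{(z)}(A) = ⨁ᵢ (z^i)/(z^{i+1})` induced by multiplication by `z`.  Then `×z` and
`×z*` have the same Jordan canonical form; equivalently
`rank((×z)^α) = rank((×z*)^α)` for all `α ≥ 1`. -/
theorem formRing_same_jordan_form (K A : Type*) [Field K] [CommRing A] [Algebra K A]
    [FiniteDimensional K A] (𝒜 : ℕ → Submodule K A) [GradedAlgebra 𝒜]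
    (z : A) (hz1 : z ∈ 𝒜 1) (p : ℕ) (hp : 0 < p) (hzp : z ^ p = 0)
    (hzp1 : z ^ (p - 1) ≠ 0)
    -- `g i : (z^i)/(z^{i+1}) → (z^{i+1})/(z^{i+2})` is induced by multiplication by `z`:
    (g : ∀ i : ℕ, grPiece K A z i →ₗ[K] grPiece K A z (i + 1))
    (hg : ∀ (i : ℕ) (a : A) (ha : a ∈ (Ideal.span {z ^ i}).restrictScalars K)
        (hza : z * a ∈ (Ideal.span {z ^ (i + 1)}).restrictScalars K),
      g i (Submodule.Quotient.mk ⟨a, ha⟩) = Submodule.Quotient.mk ⟨z * a, hza⟩)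
    -- `E = ×z*` is the endomorphism of `Gr_{(z)}(A)` assembled from the `g i`:
    (E : Module.End K (DirectSum ℕ (fun i => grPiece K A z i)))
    (hE : E = DirectSum.toModule K ℕ (DirectSum ℕ (fun i => grPiece K A z i))
      (fun i => (DirectSum.lof K ℕ (fun j => grPiece K A z j) (i + 1)) ∘ₗ g i)) :
    ∀ α : ℕ, 1 ≤ α →
      finrank K (LinearMap.range ((Algebra.lmul K A z) ^ α)) =
        finrank K (LinearMap.range (E ^ α)) := by
  classical
  intro α _
  -- LHS
  have hLHS : LinearMap.range ((Algebra.lmul K A z) ^ α)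
      = (Ideal.span {z ^ α}).restrictScalars K := by
    rw [← map_pow]
    ext x
    simp only [LinearMap.mem_range, Submodule.restrictScalars_mem]
    constructor
    · rintro ⟨y, rfl⟩
      exact Ideal.mem_span_singleton.mpr ⟨y, rfl⟩
    · intro hx
      obtain ⟨c, hc⟩ := Ideal.mem_span_singleton.mp hx
      exact ⟨c, hc.symm⟩
  -- surjectivity of the `g i`
  have hgsurj : ∀ i, Function.Surjective (g i) := by
    intro i y
    obtain ⟨⟨b, hb⟩, rfl⟩ := Submodule.Quotient.mk_surjective _ y
    have hb' : z ^ (i + 1) ∣ b := Ideal.mem_span_singleton.mp hb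
    obtain ⟨c, hc⟩ := hb'
    have ha : z ^ i * c ∈ (Ideal.span {z ^ i}).restrictScalars K :=
      Ideal.mem_span_singleton.mpr (Dvd.intro c rfl)
    have hzb : z * (z ^ i * c) = b := by rw [hc, pow_succ]; ring
    have hza : z * (z ^ i * c) ∈ (Ideal.span {z ^ (i + 1)}).restrictScalars K := by
      rw [hzb]; exact hb
    refine ⟨Submodule.Quotient.mk ⟨z ^ i * c, ha⟩, ?_⟩
    rw [hg i _ ha hza]
    congr 1
    exact Subtype.ext hzb
  -- the pieces vanish in degrees `≥ p`
  have hzj : ∀ j, p ≤ j → z ^ j = 0 := by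
    intro j hj
    calc z ^ j = z ^ p * z ^ (j - p) := by rw [← pow_add]; congr 1; omega
    _ = 0 := by rw [hzp, zero_mul]
  have hspan0 : ∀ j, p ≤ j →
      ((Ideal.span {z ^ j}).restrictScalars K : Submodule K A) = ⊥ := by
    intro j hj
    rw [hzj j hj]
    simp [Ideal.span_singleton_eq_bot.mpr rfl]
  have hM : ∀ j, p ≤ j → Subsingleton (grPiece K A z j) := by
    intro j hj
    haveI : Subsingleton ((Ideal.span {z ^ j}).restrictScalars K : Submodule K A) := by
      rw [hspan0 j hj]; infer_instance
    exact Quotient.instSubsingletonQuotient _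
  have hf0 : ∀ j, p ≤ j →
      finrank K ((Ideal.span {z ^ j}).restrictScalars K : Submodule K A) = 0 := by
    intro j hj
    rw [hspan0 j hj, finrank_bot]
  -- the recursion `dim (z^j) = dim (z^j)/(z^{j+1}) + dim (z^{j+1})`
  have hle : ∀ j : ℕ, ((Ideal.span {z ^ (j + 1)}).restrictScalars K : Submodule K A)
      ≤ (Ideal.span {z ^ j}).restrictScalars K := by
    intro j x hx
    exact Ideal.mem_span_singleton.mpr
      (dvd_trans (pow_dvd_pow z (Nat.le_succ j)) (Ideal.mem_span_singleton.mp hx))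
  have hfrec : ∀ j : ℕ,
      finrank K ((Ideal.span {z ^ j}).restrictScalars K : Submodule K A)
        = finrank K (grPiece K A z j)
          + finrank K ((Ideal.span {z ^ (j + 1)}).restrictScalars K : Submodule K A) := by
    intro j
    have h1 : finrank K (grPiece K A z j)
        + finrank K (Submodule.comap ((Ideal.span {z ^ j}).restrictScalars K).subtype
            ((Ideal.span {z ^ (j + 1)}).restrictScalars K))
        = finrank K ((Ideal.span {z ^ j}).restrictScalars K : Submodule K A) :=
      Submodule.finrank_quotient_add_finrank _
    have h2 : finrank K (Submodule.comap ((Ideal.span {z ^ j}).restrictScalars K).subtype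
        ((Ideal.span {z ^ (j + 1)}).restrictScalars K))
        = finrank K ((Ideal.span {z ^ (j + 1)}).restrictScalars K : Submodule K A) :=
      LinearEquiv.finrank_eq (Submodule.comapSubtypeEquivOfLe (hle j))
    omega
  rw [hLHS, aux_range_pow K (fun i => grPiece K A z i) g hgsurj E hE α,
    (aux_finrank_sup K (fun i => grPiece K A z i) p hM
      (fun j => finrank K ((Ideal.span {z ^ j}).restrictScalars K : Submodule K A))
      hf0 hfrec p α (by omega)).2]
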